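/- For any infinite Φ-structure A and immediate terms z_1, z_2, z_3, w_1, w_2, w_3 (z_1, w_1 of sort bool; z_2,z_3 and w_2,w_3 of matching sorts): A ⊨ (if z_1 then z_2 else z_3) = (if w_1 then w_2 else w_3) if and only if z_1 ≡ w_1, z_2 ≡ w_2, and z_3 ≡ w_3. -/

import Mathlib

namespace McCarthy

/-- Sorts: individual (`ind`) and Boolean (`bool`). -/
inductive Srt where
  | ind | bool
deriving DecidableEq

/-- A function variable is identified by its sort, arity and index. -/
abbrev FV : Type := Srt × ℕ × ℕ

/-- Explicit terms over a vocabulary `Φ`. -/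
inductive Term (Φ : Type) where
  | tt : Term Φ
  | ff : Term Φ
  | ivar : ℕ → Term Φ
  | fapp : FV → List (Term Φ) → Term Φ
  | prim : Φ → List (Term Φ) → Term Φ
  | cond : Srt → Term Φ → Term Φ → Term Φ → Term Φ

variable {Φ : Type}

def isIvar : Term Φ → Bool
  | .ivar _ => true
  | _ => false

/-- Immediate terms: individual variables, or function variables applied to
individual variables (nullary function variables included). -/
def isImmediate : Term Φ → Bool
  | .ivar _ => true
  | .fapp p args => (args.all isIvar) && (args.length == p.2.1)
  | _ => false

/-- Irreducible terms: immediate terms, Boolean constants, or applications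
with immediate arguments. -/
def isIrreducible : Term Φ → Bool
  | .tt => true
  | .ff => true
  | .ivar _ => true
  | .fapp p args => ((args.all isIvar) && (args.length == p.2.1)) || args.all isImmediate
  | .prim _ args => args.all isImmediate
  | .cond _ a b c => isImmediate a && isImmediate b && isImmediate c

/-- The sort of an immediate (or irreducible non-`prim`) term. -/
def immSort : Term Φ → Srt
  | .tt => .bool
  | .ff => .bool
  | .fapp p _ => p.1
  | .cond s _ _ _ => s
  | _ => .ind

mutual
/-- `sizeT E` counts the occurrences of non-immediate proper subterms of `E`. -/
def sizeT : Term Φ → ℕ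
  | .tt => 0
  | .ff => 0
  | .ivar _ => 0
  | .fapp _ args => sizeTL args
  | .prim _ args => sizeTL args
  | .cond _ a b c =>
      (sizeT a + (if isImmediate a then 0 else 1)) +
      (sizeT b + (if isImmediate b then 0 else 1)) +
      (sizeT c + (if isImmediate c then 0 else 1))

def sizeTL : List (Term Φ) → ℕ
  | [] => 0
  | t :: ts => (sizeT t + (if isImmediate t then 0 else 1)) + sizeTL ts
end

mutual
/-- Renaming of function variables. -/
def renameF (ρ : FV → FV) : Term Φ → Term Φ
  | .tt => .tt
  | .ff => .ff
  | .ivar i => .ivar i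
  | .fapp p args => .fapp (ρ p) (renameFL ρ args)
  | .prim f args => .prim f (renameFL ρ args)
  | .cond s a b c => .cond s (renameF ρ a) (renameF ρ b) (renameF ρ c)

def renameFL (ρ : FV → FV) : List (Term Φ) → List (Term Φ)
  | [] => []
  | t :: ts => renameF ρ t :: renameFL ρ ts
end

mutual
/-- Renaming of individual variables. -/
def renameV (σ : ℕ → ℕ) : Term Φ → Term Φ
  | .tt => .tt
  | .ff => .ff
  | .ivar i => .ivar (σ i)
  | .fapp p args => .fapp p (renameVL σ args)
  | .prim f args => .prim f (renameVL σ args)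
  | .cond s a b c => .cond s (renameV σ a) (renameV σ b) (renameV σ c)

def renameVL (σ : ℕ → ℕ) : List (Term Φ) → List (Term Φ)
  | [] => []
  | t :: ts => renameV σ t :: renameVL σ ts
end

mutual
/-- Does the function variable `q` occur in the term? -/
def occursF (q : FV) : Term Φ → Bool
  | .tt => false
  | .ff => false
  | .ivar _ => false
  | .fapp p args => (decide (p = q)) || occursFL q args
  | .prim _ args => occursFL q args
  | .cond _ a b c => occursF q a || occursF q b || occursF q c

def occursFL (q : FV) : List (Term Φ) → Bool
  | [] => false
  | t :: ts => occursF q t || occursFL q ts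
end


/-! ## Extended recursive programs -/

/-- A body equation `p(x⃗) = rhs`. -/
structure Eqn (Φ : Type) where
  p : FV
  xs : List ℕ
  rhs : Term Φ

/-- An extended recursive program `E₀(x⃗) where { p₁(x⃗₁) = E₁, …, p_K(x⃗_K) = E_K }`,
with the body represented as a multiset (set representation of the paper). -/
structure ExtProg (Φ : Type) where
  fvars : List ℕ
  head : Term Φ
  body : Multiset (Eqn Φ)

/-- The function variables bound by the body of a program. -/
def bodyPvars (E : ExtProg Φ) : Multiset FV := E.body.map Eqn.p

/-- `q` is fresh for `E`: it is not a recursion variable of `E` and occurs nowhere in `E`. -/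
def FreshIn (q : FV) (E : ExtProg Φ) : Prop :=
  occursF q E.head = false ∧ ∀ e ∈ E.body, e.p ≠ q ∧ occursF q e.rhs = false

/-- The argument list of an application term (the empty list otherwise). -/
def argsOf : Term Φ → List (Term Φ)
  | .fapp _ as => as
  | .prim _ as => as
  | .cond _ a b c => [a, b, c]
  | _ => []

/-- Replace the argument list of an application term. -/
def withArgs : Term Φ → List (Term Φ) → Term Φ
  | .fapp p _, as => .fapp p as
  | .prim f _, as => .prim f as
  | .cond s _ _ _, [a, b, c] => .cond s a b c
  | t, _ => t

def isApp : Term Φ → Bool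
  | .fapp _ _ => true
  | .prim _ _ => true
  | .cond _ _ _ _ => true
  | _ => false

/-- Labels `(p, j, q)` of arrow reductions. -/
abbrev Lbl : Type := FV × ℕ × FV

/-- The arrow-reduction relation `E(x⃗) →^{(p,j,q)} F(x⃗)` on extended programs:
either a non-immediate `j`-th argument of the (outermost application) right-hand side
of the body equation for `p` is split off into a new equation for the fresh variable `q`
(body case), or — when `p` is fresh, serving merely as a marker — the non-immediate
`j`-th argument of the head is split off (head case). -/
inductive Step : Lbl → ExtProg Φ → ExtProg Φ → Prop where
  | body (p : FV) (j : ℕ) (q : FV) (E F : ExtProg Φ) (s : Multiset (Eqn Φ)) (e : Eqn Φ)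
      (G : Term Φ)
      (hbody : E.body = s + {e}) (hp : e.p = p) (happ : isApp e.rhs = true)
      (hG : (argsOf e.rhs)[j]? = some G) (himm : isImmediate G = false)
      (hq : FreshIn q E) (har : q.2.1 = e.xs.length)
      (hF : F = ⟨E.fvars, E.head,
        s + {⟨p, e.xs, withArgs e.rhs ((argsOf e.rhs).set j (.fapp q (e.xs.map Term.ivar)))⟩,
             ⟨q, e.xs, G⟩}⟩) :
      Step (p, j, q) E F
  | head (p : FV) (j : ℕ) (q : FV) (E F : ExtProg Φ) (G : Term Φ)
      (hp : FreshIn p E) (hq : FreshIn q E) (hpq : p ≠ q) (happ : isApp E.head = true)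
      (hG : (argsOf E.head)[j]? = some G) (himm : isImmediate G = false)
      (har : q.2.1 = E.fvars.length)
      (hF : F = ⟨E.fvars,
        withArgs E.head ((argsOf E.head).set j (.fapp q (E.fvars.map Term.ivar))),
        E.body + {⟨q, E.fvars, G⟩}⟩) :
      Step (p, j, q) E F

/-- One-step reduction: arrow reduction for some label. -/
def Step1 (E F : ExtProg Φ) : Prop := ∃ l : Lbl, Step l E F

/-- The `~_E` relation on function variables used in the Amalgamation Lemma:
`p ~_E p'` iff both are the same recursion variable of `E` (body case) or
neither is a recursion variable of `E` (head case). -/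
def SameCase (E : ExtProg Φ) (p p' : FV) : Prop :=
  (p = p' ∧ p ∈ bodyPvars E) ∨ (p ∉ bodyPvars E ∧ p' ∉ bodyPvars E)

/-- Size of an extended program: total number of occurrences of non-immediate
proper subterms of its parts. -/
def sizeP (E : ExtProg Φ) : ℕ := sizeT E.head + (E.body.map (fun e => sizeT e.rhs)).sum

/-- An extended program is irreducible if all its parts are irreducible terms. -/
def IrrProg (E : ExtProg Φ) : Prop :=
  isIrreducible E.head = true ∧ ∀ e ∈ E.body, isIrreducible e.rhs = true

/-! ## Congruence -/

/-- `ρ` preserves sorts and arities of function variables. -/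
def SortArityPres (ρ : FV → FV) : Prop := ∀ v : FV, (ρ v).1 = v.1 ∧ (ρ v).2.1 = v.2.1

/-- One equation is obtained from another by renaming the (bound) individual
variables and applying a renaming `ρ` of the function variables. -/
def EqnCong (ρ : FV → FV) (e f : Eqn Φ) : Prop :=
  f.p = ρ e.p ∧ ∃ σ : ℕ → ℕ,
    (∀ a ∈ e.xs, ∀ b ∈ e.xs, σ a = σ b → a = b) ∧
    f.xs = e.xs.map σ ∧ f.rhs = renameV σ (renameF ρ e.rhs)

/-- Congruence of extended programs: an alphabetic change of the bound individual
and function variables together with a permutation of the body equations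
(the latter being automatic in the multiset representation). -/
def Congruent (E F : ExtProg Φ) : Prop :=
  ∃ ρ : FV → FV, Function.Bijective ρ ∧ SortArityPres ρ ∧
    (∀ p : FV, p ∉ bodyPvars E → ρ p = p) ∧
    F.fvars = E.fvars ∧ F.head = renameF ρ E.head ∧
    Multiset.Rel (EqnCong ρ) E.body F.body

/-- Full reduction: a (possibly empty) chain of one-step reductions followed by a
congruence, i.e. `E ≡_c F` or `E →₁ ⋯ →₁ F' ≡_c F`. -/
def Reduces (E F : ExtProg Φ) : Prop :=
  ∃ G : ExtProg Φ, Relation.ReflTransGen Step1 E G ∧ Congruent G F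


/-! ## Semantics -/

section Semantics

variable {A : Type}

/-- An environment for the function variables: a partial function
`Aⁿ ⇀ A ⊕ Bool` for each function variable (`none` = divergence). -/
abbrev Env (A : Type) : Type := FV → List A → Option (A ⊕ Bool)

/-- A `Φ`-structure on the universe `A`: a partial interpretation of each
primitive (`Sum.inl` for sort `ind`, `Sum.inr` for sort `bool`). -/
abbrev Struc (Φ A : Type) : Type := Φ → List A → Option (A ⊕ Bool)

/-- An environment is sort- and arity-respecting. -/
def GoodEnv (env : Env A) : Prop :=
  ∀ p : FV, ∀ as v, env p as = some v →
    as.length = p.2.1 ∧ (p.1 = Srt.ind → ∃ a, v = Sum.inl a) ∧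
    (p.1 = Srt.bool → ∃ b, v = Sum.inr b)

/-- A structure is sort- and arity-respecting. -/
def GoodStruc (St : Struc Φ A) (arΦ : Φ → ℕ) (sΦ : Φ → Srt) : Prop :=
  ∀ φ as v, St φ as = some v →
    as.length = arΦ φ ∧ (sΦ φ = Srt.ind → ∃ a, v = Sum.inl a) ∧
    (sΦ φ = Srt.bool → ∃ b, v = Sum.inr b)

/-- A structure is total (on arguments of the right arity). -/
def TotalStruc (St : Struc Φ A) (arΦ : Φ → ℕ) : Prop :=
  ∀ φ as, as.length = arΦ φ → (St φ as).isSome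

mutual
/-- Kleene evaluation of terms: `none` means divergence; arguments of
applications are evaluated strictly and must be of sort `ind`; the conditional
evaluates its test first and then the selected branch. -/
def eval (St : Struc Φ A) (iv : ℕ → A) (env : Env A) : Term Φ → Option (A ⊕ Bool)
  | .tt => some (Sum.inr true)
  | .ff => some (Sum.inr false)
  | .ivar i => some (Sum.inl (iv i))
  | .fapp p args =>
      match evalArgs St iv env args with
      | none => none
      | some as => env p as
  | .prim f args =>
      match evalArgs St iv env args with
      | none => none
      | some as => St f as
  | .cond _ a b c =>
      match eval St iv env a with
      | some (Sum.inr true) => eval St iv env b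
      | some (Sum.inr false) => eval St iv env c
      | _ => none

def evalArgs (St : Struc Φ A) (iv : ℕ → A) (env : Env A) :
    List (Term Φ) → Option (List A)
  | [] => some []
  | t :: ts =>
      match eval St iv env t with
      | some (Sum.inl a) =>
          match evalArgs St iv env ts with
          | some as => some (a :: as)
          | none => none
      | _ => none
end

/-- Validity of the identity `E = F` in the structure: Kleene strong equality
under every assignment of individuals to the individual variables and of
sort-respecting partial functions to the function variables. -/
def Valid (St : Struc Φ A) (E F : Term Φ) : Prop :=
  ∀ (iv : ℕ → A) (env : Env A), GoodEnv env → eval St iv env E = eval St iv env F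

/-- An individual variable is *placed* in the identity
`φ(zs₁) = ψ(zs₂)` if it is one of the listed immediate arguments. -/
def Placed (zs₁ zs₂ : List (Term Φ)) (s : ℕ) : Prop := Term.ivar s ∈ zs₁ ++ zs₂

/-- Injective validity `A ⊨_inj φ(zs₁) = ψ(zs₂)`: validity under all
assignments which are injective on the placed individual variables. -/
def ValidInjId (St : Struc Φ A) (φ ψ : Φ) (zs₁ zs₂ : List (Term Φ)) : Prop :=
  ∀ (iv : ℕ → A) (env : Env A), GoodEnv env →
    (∀ s t, Placed zs₁ zs₂ s → Placed zs₁ zs₂ t → iv s = iv t → s = t) →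
    eval St iv env (.prim φ zs₁) = eval St iv env (.prim ψ zs₂)

/-- Bind the variables `xs` to the values `as` on top of the assignment `iv`. -/
def bindList (xs : List ℕ) (as : List A) (iv : ℕ → A) (i : ℕ) : A :=
  match xs.findIdx? (· = i) with
  | some k => as.getD k (iv i)
  | none => iv i

/-- `env` solves the system of recursive equations in the body of `E`. -/
def Solves (St : Struc Φ A) (iv : ℕ → A) (E : ExtProg Φ) (env : Env A) : Prop :=
  ∀ e ∈ E.body, ∀ as : List A, as.length = e.xs.length →
    env e.p as = eval St (bindList e.xs as iv) env e.rhs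

/-- The pointwise partial-function (information) ordering on environments. -/
def envLE (env env' : Env A) : Prop :=
  ∀ p as, env p as = none ∨ env p as = env' p as

/-- `Den St iv E w` : the denotation of the extended program `E` at the
assignment `iv` is `w`, computed by evaluating the head at the least solution
of the body. -/
def Den (St : Struc Φ A) (iv : ℕ → A) (E : ExtProg Φ) (w : Option (A ⊕ Bool)) : Prop :=
  ∃ env : Env A, Solves St iv E env ∧ (∀ env', Solves St iv E env' → envLE env env') ∧
    eval St iv env E.head = w

/-! ## Recursors and intensions -/

/-- The renaming of individual variables matching the list `xs` with the list `ys`. -/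
def bindRen (xs ys : List ℕ) (i : ℕ) : ℕ :=
  match xs.findIdx? (· = i) with
  | some k => ys.getD k i
  | none => i

/-- The parts of two irreducible programs define the same functional, modulo the
renaming `ρ` of the recursion variables and the matching of the bound individual
variables. -/
def EqnSemEq (St : Struc Φ A) (ρ : FV → FV) (e f : Eqn Φ) : Prop :=
  e.p = ρ f.p ∧ e.xs.length = f.xs.length ∧
  ∀ (iv : ℕ → A) (env : Env A), GoodEnv env →
    eval St iv env e.rhs = eval St iv env (renameV (bindRen f.xs e.xs) (renameF ρ f.rhs))

/-- The recursors of `E` and `F` on the structure are equal (strongly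
isomorphic): the bodies match up to a sort- and arity-preserving bijection of the
recursion variables, with the corresponding parts denoting the same functionals. -/
def RecEq (St : Struc Φ A) (E F : ExtProg Φ) : Prop :=
  ∃ ρ : FV → FV, Function.Bijective ρ ∧ SortArityPres ρ ∧
    (∀ (iv : ℕ → A) (env : Env A), GoodEnv env →
      eval St iv env E.head = eval St iv env (renameF ρ F.head)) ∧
    Multiset.Rel (EqnSemEq St ρ) E.body F.body

/-- Intensional equivalence on a structure: the referential intensions (the
recursors of the canonical forms) of the two programs are equal. -/
def IntEqOn (St : Struc Φ A) (E F : ExtProg Φ) : Prop :=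
  ∃ E' F' : ExtProg Φ, Reduces E E' ∧ IrrProg E' ∧ Reduces F F' ∧ IrrProg F' ∧
    RecEq St E' F'

end Semantics

/-- Global intensional equivalence: equal referential intensions in every
infinite `Φ`-structure. -/
def GlobalIntEq (E F : ExtProg Φ) : Prop :=
  ∀ (A : Type) (St : Struc Φ A), Infinite A → IntEqOn St E F

/-- A program is proper if none of its parts is an immediate term of Boolean sort. -/
def ProperProg (E : ExtProg Φ) : Prop :=
  ¬(isImmediate E.head = true ∧ immSort E.head = Srt.bool) ∧
  ∀ e ∈ E.body, ¬(isImmediate e.rhs = true ∧ immSort e.rhs = Srt.bool)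


/-! ## Pure algebraic terms (Statement 0) -/

/-- Pure algebraic terms: built only from individual variables and function
variables of sort `ind` (of the correct arities) by application. -/
inductive PureAlg : Term Φ → Prop where
  | ivar (i : ℕ) : PureAlg (.ivar i)
  | fapp (n i : ℕ) (args : List (Term Φ)) (hargs : ∀ t ∈ args, PureAlg t)
      (hlen : args.length = n) : PureAlg (.fapp (Srt.ind, n, i) args)

/-! ## Bare identities (Statements 14, 16) -/

/-- A term is an individual variable or a nullary function variable of sort `ind`. -/
def BareVarT (t : Term Φ) : Prop :=
  (∃ i, t = Term.ivar i) ∨ (∃ i, t = Term.fapp (Srt.ind, 0, i) [])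

/-- A bare variable: `(false, i)` codes the individual variable `v_i`,
`(true, i)` codes the nullary function variable `p^{ind,0}_i`. -/
abbrev BareVar : Type := Bool × ℕ

/-- Canonical choice of bare variables: each variable occurring for the first
time is the first unused variable of its kind in the fixed alternating list
`v₀, p₀, v₁, p₁, …`. -/
def CanonicalBare (xs : List BareVar) : Prop :=
  ∀ i x, xs[i]? = some x → (∀ j < i, xs[j]? ≠ some x) →
    x.2 = (((xs.take i).filter (fun y => y.1 == x.1)).dedup).length

/-- The representative function of an equivalence relation `r` on the placed
variables: a placed variable is sent to the least element of its class. -/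
noncomputable def repFun (placed : ℕ → Prop) (r : ℕ → ℕ → Prop) (s : ℕ) : ℕ :=
  open Classical in
  if placed s then sInf {j | r s j} else s

/-! ## Propositional programs coding graphs (Statement 19) -/

/-- The propositional variable `r`. -/
def rVar : FV := (Srt.bool, 0, 0)

/-- The propositional variable `p_i`. -/
def pVar (n : ℕ) (i : Fin n) : FV := (Srt.bool, 0, 1 + (i : ℕ))

/-- The propositional variable `p_{ij}`. -/
def pijVar (n : ℕ) (i j : Fin n) : FV := (Srt.bool, 0, 1 + n + ((i : ℕ) * n + (j : ℕ)))

/-- The part `E_{ij}` of the program coding the graph `E`. -/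
def edgeTerm (n : ℕ) (E : Fin n → Fin n → Bool) (i j : Fin n) : Term Empty :=
  if E i j then
    .cond Srt.bool (.fapp (pVar n i) []) (.fapp (pVar n j) []) (.fapp rVar [])
  else
    .cond Srt.bool (.fapp (pVar n i) []) (.fapp rVar []) (.fapp (pVar n j) [])

/-- The irreducible propositional program `prog(E)` coding the graph `E`:
`true where { p_i = p_i : i < n } ∪ { p_{ij} = E_{ij} : i,j < n } ∪ { r = false }`. -/
def graphProg (n : ℕ) (E : Fin n → Fin n → Bool) : ExtProg Empty where
  fvars := []
  head := .tt
  body :=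
    (Finset.univ.val.map (fun i : Fin n => (⟨pVar n i, [], .fapp (pVar n i) []⟩ : Eqn Empty)))
    + ((Finset.univ.val (α := Fin n × Fin n)).map
        (fun ij => (⟨pijVar n ij.1 ij.2, [], edgeTerm n E ij.1 ij.2⟩ : Eqn Empty)))
    + {⟨rVar, [], .ff⟩}

/-! ### Auxiliary lemmas for Statement 8 -/

section Aux

variable {A : Type}

lemma all_ivar_form {args : List (Term Φ)} (h : args.all isIvar = true) :
    ∃ l : List ℕ, args = l.map Term.ivar := by
  induction args with
  | nil => exact ⟨[], rfl⟩
  | cons t ts ih =>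
    simp only [List.all_cons, Bool.and_eq_true] at h
    obtain ⟨l, rfl⟩ := ih h.2
    cases t <;> simp [isIvar] at h
    exact ⟨_ :: l, rfl⟩

lemma imm_form {t : Term Φ} (h : isImmediate t = true) :
    (∃ i, t = .ivar i ∧ immSort t = Srt.ind) ∨
    (∃ p l, t = .fapp p (l.map Term.ivar) ∧ (l : List ℕ).length = p.2.1 ∧
      immSort t = p.1) := by
  cases t with
  | ivar i => exact Or.inl ⟨i, rfl, rfl⟩
  | fapp p args =>
    simp only [isImmediate, Bool.and_eq_true, beq_iff_eq] at h
    obtain ⟨l, rfl⟩ := all_ivar_form h.1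
    refine Or.inr ⟨p, l, rfl, ?_, rfl⟩
    simpa using h.2
  | tt => simp [isImmediate] at h
  | ff => simp [isImmediate] at h
  | prim f args => simp [isImmediate] at h
  | cond s a b c => simp [isImmediate] at h

lemma evalArgs_ivars (St : Struc Φ A) (iv : ℕ → A) (env : Env A) (l : List ℕ) :
    evalArgs St iv env (l.map Term.ivar) = some (l.map iv) := by
  induction l with
  | nil => simp [evalArgs]
  | cons i l ih => simp [evalArgs, eval, ih]

lemma eval_fapp (St : Struc Φ A) (iv : ℕ → A) (env : Env A) (p : FV) (l : List ℕ) :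
    eval St iv env (.fapp p (l.map Term.ivar)) = env p (l.map iv) := by
  simp [eval, evalArgs_ivars]

lemma fapp_key_inj {iv : ℕ → A} (hiv : Function.Injective iv) {p q : FV} {l m : List ℕ}
    (h : ((p, l.map iv) : FV × List A) = (q, m.map iv)) :
    (Term.fapp p (l.map Term.ivar) : Term Φ) = .fapp q (m.map Term.ivar) := by
  rw [Prod.mk.injEq] at h
  obtain ⟨rfl, h2⟩ := h
  have : l = m := List.map_injective_iff.mpr hiv h2
  rw [this]

/-- Kleene conditional on `Option Bool`. -/
def K (x y z : Option Bool) : Option Bool :=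
  match x with
  | some true => y
  | some false => z
  | none => none

lemma absLemma {T : Type} (a b c d e f : T)
    (H : ∀ h : T → Option Bool, K (h a) (h b) (h c) = K (h d) (h e) (h f)) :
    a = d ∧ b = e ∧ c = f := by
  classical
  have had : a = d := by
    by_contra had
    have hb : b = d := by
      have := H (fun x => if x = d then none else some true)
      simp only [if_neg had] at this
      by_contra hbd
      simp [K, hbd] at this
    have hc : c = d := by
      have := H (fun x => if x = d then none else some false)
      simp only [if_neg had] at this
      by_contra hcd
      simp [K, hcd] at this
    have he : e = a := by
      have := H (fun x => if x = a then none else some true)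
      simp only [if_pos rfl, if_neg (Ne.symm had)] at this
      by_contra hea
      simp [K, hea] at this
    have hf : f = a := by
      have := H (fun x => if x = a then none else some false)
      simp only [if_pos rfl, if_neg (Ne.symm had)] at this
      by_contra hfa
      simp [K, hfa] at this
    have := H (fun x => if x = a then some true else some false)
    simp [K, hb, he, hf, if_pos rfl, if_neg (Ne.symm had), if_neg had] at this
  subst had
  have hbe : b = e := by
    by_contra hbe
    by_cases hea : e = a
    · subst hea
      have := H (fun x => if x = b then some false else some true)
      simp [K, Ne.symm hbe] at this
    · have := H (fun x => if x = e then some false else some true)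
      simp [K, Ne.symm hea, hbe] at this
  have hcf : c = f := by
    by_contra hcf
    by_cases hfa : f = a
    · subst hfa
      have := H (fun x => if x = c then some true else some false)
      simp [K, Ne.symm hcf] at this
    · have := H (fun x => if x = f then some true else some false)
      simp [K, Ne.symm hfa, hcf] at this
  exact ⟨rfl, hbe, hcf⟩

/-- Environment realizing an arbitrary boolean valuation of keys. -/
def boolEnv (h : FV × List A → Option Bool) : Env A :=
  fun p as => if p.1 = Srt.bool ∧ as.length = p.2.1 then (h (p, as)).map Sum.inr else none

lemma boolEnv_good (h : FV × List A → Option Bool) : GoodEnv (boolEnv (A := A) h) := by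
  intro p as v hv
  unfold boolEnv at hv
  split at hv
  · rename_i hcond
    refine ⟨hcond.2, ?_, ?_⟩
    · intro hind; rw [hind] at hcond; exact absurd hcond.1 (by simp)
    · intro _
      cases hh : h (p, as) with
      | none => simp [hh] at hv
      | some b => simp [hh] at hv; exact ⟨b, hv.symm⟩
  · simp at hv

lemma boolEnv_eval (St : Struc Φ A) (iv : ℕ → A) (h : FV × List A → Option Bool)
    {p : FV} {l : List ℕ} (hp : p.1 = Srt.bool) (hl : l.length = p.2.1) :
    eval St iv (boolEnv h) (.fapp p (l.map Term.ivar)) = (h (p, l.map iv)).map Sum.inr := by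
  rw [eval_fapp]
  unfold boolEnv
  rw [if_pos ⟨hp, by simpa using hl⟩]

lemma match_map (x y z : Option Bool) :
    (match (x.map Sum.inr : Option (A ⊕ Bool)) with
      | some (Sum.inr true) => (y.map Sum.inr : Option (A ⊕ Bool))
      | some (Sum.inr false) => z.map Sum.inr
      | _ => none) = (K x y z).map Sum.inr := by
  match x with
  | none => rfl
  | some true => rfl
  | some false => rfl

/-- Kleene conditional on `Option (A ⊕ Bool)`. -/
def KV (x y z : Option (A ⊕ Bool)) : Option (A ⊕ Bool) :=
  match x with
  | some (Sum.inr true) => y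
  | some (Sum.inr false) => z
  | _ => none

lemma eval_cond (St : Struc Φ A) (iv : ℕ → A) (env : Env A) (s : Srt) (a b c : Term Φ) :
    eval St iv env (.cond s a b c) =
      KV (eval St iv env a) (eval St iv env b) (eval St iv env c) := by
  rcases h : eval St iv env a with - | v
  · simp [eval, KV, h]
  · rcases v with x | bb
    · simp [eval, KV, h]
    · cases bb <;> simp [eval, KV, h]

lemma KV_map (x y z : Option Bool) :
    KV (A := A) (x.map Sum.inr) (y.map Sum.inr) (z.map Sum.inr) = (K x y z).map Sum.inr := by
  match x with
  | none => rfl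
  | some true => rfl
  | some false => rfl

/-- Environment giving all Boolean applications the value `tb`, deferring to
`extra` on individual applications. -/
def testEnv (tb : Bool) (extra : Env A) : Env A :=
  fun p as => if p.1 = Srt.bool ∧ as.length = p.2.1 then some (Sum.inr tb) else extra p as

lemma testEnv_good (tb : Bool) {extra : Env A} (hx : GoodEnv extra) :
    GoodEnv (testEnv tb extra) := by
  intro p as v hv
  unfold testEnv at hv
  split at hv
  · rename_i hc
    injection hv with hv
    subst hv
    refine ⟨hc.2, ?_, fun _ => ⟨tb, rfl⟩⟩
    intro hind; rw [hind] at hc; exact absurd hc.1 (by simp)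
  · exact hx p as v hv

lemma noneEnv_good : GoodEnv (fun (_ : FV) (_ : List A) => none) := by
  intro p as v hv; simp at hv

lemma testEnv_eval_bool (St : Struc Φ A) (iv : ℕ → A) (tb : Bool) (extra : Env A)
    {p : FV} {l : List ℕ} (hp : p.1 = Srt.bool) (hl : l.length = p.2.1) :
    eval St iv (testEnv tb extra) (.fapp p (l.map Term.ivar)) = some (Sum.inr tb) := by
  rw [eval_fapp]; unfold testEnv; rw [if_pos ⟨hp, by simpa using hl⟩]

lemma testEnv_eval_ind (St : Struc Φ A) (iv : ℕ → A) (tb : Bool) (extra : Env A)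
    {p : FV} {l : List ℕ} (hp : p.1 = Srt.ind) :
    eval St iv (testEnv tb extra) (.fapp p (l.map Term.ivar)) = extra p (l.map iv) := by
  rw [eval_fapp]; unfold testEnv
  rw [if_neg (by rintro ⟨h1, -⟩; rw [hp] at h1; simp at h1)]

open Classical in
/-- Environment defined (with value `Sum.inl a`) at a single individual key. -/
noncomputable def oneKey (k : FV × List A) (a : A) : Env A :=
  fun p as =>
    if (p, as) = k ∧ p.1 = Srt.ind ∧ as.length = p.2.1 then some (Sum.inl a) else none

lemma oneKey_good (k : FV × List A) (a : A) : GoodEnv (oneKey k a) := by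
  intro p as v hv
  unfold oneKey at hv
  split at hv
  · rename_i hc
    injection hv with hv
    subst hv
    refine ⟨hc.2.2, fun _ => ⟨a, rfl⟩, ?_⟩
    intro hb; rw [hb] at hc; exact absurd hc.2.1 (by simp)
  · simp at hv

open Classical in
/-- Environment giving `true` at a single Boolean key and `Sum.inl a` at all
individual keys, diverging elsewhere. -/
noncomputable def testEnv2 (k : FV × List A) (a : A) : Env A :=
  fun p as =>
    if (p, as) = k ∧ p.1 = Srt.bool ∧ as.length = p.2.1 then some (Sum.inr true)
    else if p.1 = Srt.ind ∧ as.length = p.2.1 then some (Sum.inl a) else none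

lemma testEnv2_good (k : FV × List A) (a : A) : GoodEnv (testEnv2 k a) := by
  intro p as v hv
  unfold testEnv2 at hv
  split at hv
  · rename_i hc
    injection hv with hv
    subst hv
    refine ⟨hc.2.2, ?_, fun _ => ⟨true, rfl⟩⟩
    intro hind; rw [hind] at hc; exact absurd hc.2.1 (by simp)
  · split at hv
    · rename_i hc
      injection hv with hv
      subst hv
      refine ⟨hc.2, fun _ => ⟨a, rfl⟩, ?_⟩
      intro hb; rw [hb] at hc; exact absurd hc.1 (by simp)
    · simp at hv

end Aux

/-- **form 3–3.** In any infinite `Φ`-structure, an identity between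
two conditionals with immediate parts (`z₁, w₁` of sort `bool`, the branches of
matching sorts) is valid iff `z₁ ≡ w₁`, `z₂ ≡ w₂` and `z₃ ≡ w₃`. -/
theorem statement8 {Φ A : Type} [Infinite A] (St : Struc Φ A) (s : Srt)
    (z₁ z₂ z₃ w₁ w₂ w₃ : Term Φ)
    (himm : ∀ t ∈ [z₁, z₂, z₃, w₁, w₂, w₃], isImmediate t = true)
    (hz₁ : immSort z₁ = Srt.bool) (hw₁ : immSort w₁ = Srt.bool)
    (hz₂ : immSort z₂ = s) (hz₃ : immSort z₃ = s)
    (hw₂ : immSort w₂ = s) (hw₃ : immSort w₃ = s) :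
    Valid St (.cond s z₁ z₂ z₃) (.cond s w₁ w₂ w₃) ↔
      (z₁ = w₁ ∧ z₂ = w₂ ∧ z₃ = w₃) := by
  classical
  constructor
  · intro hval
    obtain ⟨iv, hiv⟩ : ∃ iv : ℕ → A, Function.Injective iv :=
      ⟨fun n => Infinite.natEmbedding A n, (Infinite.natEmbedding A).injective⟩
    have h1 := himm z₁ (by simp)
    have h2 := himm z₂ (by simp)
    have h3 := himm z₃ (by simp)
    have h4 := himm w₁ (by simp)
    have h5 := himm w₂ (by simp)
    have h6 := himm w₃ (by simp)
    have hformb : ∀ t : Term Φ, isImmediate t = true → immSort t = Srt.bool →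
        ∃ p l, t = .fapp p (l.map Term.ivar) ∧ (l : List ℕ).length = p.2.1 ∧
          p.1 = Srt.bool := by
      intro t ht hts
      rcases imm_form ht with ⟨i, rfl, hs⟩ | ⟨p, l, rfl, hl, hs⟩
      · rw [hts] at hs; simp at hs
      · exact ⟨p, l, rfl, hl, by rw [← hs, hts]⟩
    have hformi : ∀ t : Term Φ, isImmediate t = true → immSort t = Srt.ind →
        (∃ i, t = .ivar i) ∨ (∃ p l, t = .fapp p (l.map Term.ivar) ∧
          (l : List ℕ).length = p.2.1 ∧ p.1 = Srt.ind) := by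
      intro t ht hts
      rcases imm_form ht with ⟨i, rfl, _⟩ | ⟨p, l, rfl, hl, hs⟩
      · exact Or.inl ⟨i, rfl⟩
      · exact Or.inr ⟨p, l, rfl, hl, by rw [← hs, hts]⟩
    obtain ⟨p₁, l₁, hz₁e, hl₁, hp₁⟩ := hformb z₁ h1 hz₁
    obtain ⟨q₁, m₁, hw₁e, hm₁, hq₁⟩ := hformb w₁ h4 hw₁
    subst hz₁e hw₁e
    cases s with
    | bool =>
      obtain ⟨p₂, l₂, hz₂e, hl₂, hp₂⟩ := hformb z₂ h2 hz₂
      obtain ⟨p₃, l₃, hz₃e, hl₃, hp₃⟩ := hformb z₃ h3 hz₃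
      obtain ⟨q₂, m₂, hw₂e, hm₂, hq₂⟩ := hformb w₂ h5 hw₂
      obtain ⟨q₃, m₃, hw₃e, hm₃, hq₃⟩ := hformb w₃ h6 hw₃
      subst hz₂e hz₃e hw₂e hw₃e
      have H : ∀ h : FV × List A → Option Bool,
          K (h (p₁, l₁.map iv)) (h (p₂, l₂.map iv)) (h (p₃, l₃.map iv)) =
          K (h (q₁, m₁.map iv)) (h (q₂, m₂.map iv)) (h (q₃, m₃.map iv)) := by
        intro h
        have hv := hval iv (boolEnv h) (boolEnv_good h)
        rw [eval_cond, eval_cond, boolEnv_eval St iv h hp₁ hl₁,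
          boolEnv_eval St iv h hp₂ hl₂, boolEnv_eval St iv h hp₃ hl₃,
          boolEnv_eval St iv h hq₁ hm₁, boolEnv_eval St iv h hq₂ hm₂,
          boolEnv_eval St iv h hq₃ hm₃, KV_map, KV_map] at hv
        exact Option.map_injective Sum.inr_injective hv
      obtain ⟨e1, e2, e3⟩ := absLemma _ _ _ _ _ _ H
      exact ⟨fapp_key_inj hiv e1, fapp_key_inj hiv e2, fapp_key_inj hiv e3⟩
    | ind =>
      refine ⟨?_, ?_, ?_⟩
      · -- z₁ = w₁
        by_contra hne
        have hk : ((p₁, l₁.map iv) : FV × List A) ≠ (q₁, m₁.map iv) :=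
          fun h => hne (fapp_key_inj hiv h)
        set env := testEnv2 (A := A) (p₁, l₁.map iv) (iv 0) with henv
        have hv := hval iv env (testEnv2_good _ _)
        rw [eval_cond, eval_cond] at hv
        have hz₁v : eval St iv env (.fapp p₁ (l₁.map Term.ivar)) = some (Sum.inr true) := by
          rw [eval_fapp, henv]; unfold testEnv2
          rw [if_pos ⟨rfl, hp₁, by simpa using hl₁⟩]
        have hw₁v : eval St iv env (.fapp q₁ (m₁.map Term.ivar)) = none := by
          rw [eval_fapp, henv]; unfold testEnv2
          rw [if_neg (by rintro ⟨h', -⟩; exact hk h'.symm),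
            if_neg (by rintro ⟨h', -⟩; rw [hq₁] at h'; simp at h')]
        have hz₂v : ∃ v, eval St iv env z₂ = some v := by
          rcases hformi z₂ h2 hz₂ with ⟨i, rfl⟩ | ⟨p₂, l₂, rfl, hl₂, hp₂⟩
          · exact ⟨Sum.inl (iv i), by simp [eval]⟩
          · refine ⟨Sum.inl (iv 0), ?_⟩
            rw [eval_fapp, henv]; unfold testEnv2
            rw [if_neg (by
                rintro ⟨h', -⟩
                rw [Prod.mk.injEq] at h'
                have : p₂.1 = p₁.1 := by rw [h'.1]
                rw [hp₂, hp₁] at this; simp at this),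
              if_pos ⟨hp₂, by simpa using hl₂⟩]
        obtain ⟨v, hz₂v⟩ := hz₂v
        rw [hz₁v, hw₁v, hz₂v] at hv
        simp [KV] at hv
      · -- z₂ = w₂
        rcases hformi z₂ h2 hz₂ with ⟨i, rfl⟩ | ⟨p₂, l₂, rfl, hl₂, hp₂⟩ <;>
          rcases hformi w₂ h5 hw₂ with ⟨j, rfl⟩ | ⟨q₂, m₂, rfl, hm₂, hq₂⟩
        · have hv := hval iv (testEnv true (fun _ _ => none))
            (testEnv_good _ noneEnv_good)
          rw [eval_cond, eval_cond, testEnv_eval_bool St iv true _ hp₁ hl₁,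
            testEnv_eval_bool St iv true _ hq₁ hm₁] at hv
          simp [KV, eval] at hv
          rw [hiv hv]
        · have hv := hval iv (testEnv true (fun _ _ => none))
            (testEnv_good _ noneEnv_good)
          rw [eval_cond, eval_cond, testEnv_eval_bool St iv true _ hp₁ hl₁,
            testEnv_eval_bool St iv true _ hq₁ hm₁,
            testEnv_eval_ind St iv true _ hq₂] at hv
          simp [KV, eval] at hv
        · have hv := hval iv (testEnv true (fun _ _ => none))
            (testEnv_good _ noneEnv_good)
          rw [eval_cond, eval_cond, testEnv_eval_bool St iv true _ hp₁ hl₁,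
            testEnv_eval_bool St iv true _ hq₁ hm₁,
            testEnv_eval_ind St iv true _ hp₂] at hv
          simp [KV, eval] at hv
        · by_contra hne
          have hk : ((p₂, l₂.map iv) : FV × List A) ≠ (q₂, m₂.map iv) :=
            fun h => hne (fapp_key_inj hiv h)
          have hv := hval iv (testEnv true (oneKey (q₂, m₂.map iv) (iv 0)))
            (testEnv_good _ (oneKey_good _ _))
          rw [eval_cond, eval_cond, testEnv_eval_bool St iv true _ hp₁ hl₁,
            testEnv_eval_bool St iv true _ hq₁ hm₁,
            testEnv_eval_ind St iv true _ hp₂,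
            testEnv_eval_ind St iv true _ hq₂] at hv
          unfold oneKey at hv
          rw [if_neg (by rintro ⟨h', -⟩; exact hk h'),
            if_pos ⟨rfl, hq₂, by simpa using hm₂⟩] at hv
          simp [KV] at hv
      · -- z₃ = w₃
        rcases hformi z₃ h3 hz₃ with ⟨i, rfl⟩ | ⟨p₃, l₃, rfl, hl₃, hp₃⟩ <;>
          rcases hformi w₃ h6 hw₃ with ⟨j, rfl⟩ | ⟨q₃, m₃, rfl, hm₃, hq₃⟩
        · have hv := hval iv (testEnv false (fun _ _ => none))
            (testEnv_good _ noneEnv_good)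
          rw [eval_cond, eval_cond, testEnv_eval_bool St iv false _ hp₁ hl₁,
            testEnv_eval_bool St iv false _ hq₁ hm₁] at hv
          simp [KV, eval] at hv
          rw [hiv hv]
        · have hv := hval iv (testEnv false (fun _ _ => none))
            (testEnv_good _ noneEnv_good)
          rw [eval_cond, eval_cond, testEnv_eval_bool St iv false _ hp₁ hl₁,
            testEnv_eval_bool St iv false _ hq₁ hm₁,
            testEnv_eval_ind St iv false _ hq₃] at hv
          simp [KV, eval] at hv
        · have hv := hval iv (testEnv false (fun _ _ => none))
            (testEnv_good _ noneEnv_good)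
          rw [eval_cond, eval_cond, testEnv_eval_bool St iv false _ hp₁ hl₁,
            testEnv_eval_bool St iv false _ hq₁ hm₁,
            testEnv_eval_ind St iv false _ hp₃] at hv
          simp [KV, eval] at hv
        · by_contra hne
          have hk : ((p₃, l₃.map iv) : FV × List A) ≠ (q₃, m₃.map iv) :=
            fun h => hne (fapp_key_inj hiv h)
          have hv := hval iv (testEnv false (oneKey (q₃, m₃.map iv) (iv 0)))
            (testEnv_good _ (oneKey_good _ _))
          rw [eval_cond, eval_cond, testEnv_eval_bool St iv false _ hp₁ hl₁,
            testEnv_eval_bool St iv false _ hq₁ hm₁,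
            testEnv_eval_ind St iv false _ hp₃,
            testEnv_eval_ind St iv false _ hq₃] at hv
          unfold oneKey at hv
          rw [if_neg (by rintro ⟨h', -⟩; exact hk h'),
            if_pos ⟨rfl, hq₃, by simpa using hm₃⟩] at hv
          simp [KV] at hv
  · rintro ⟨rfl, rfl, rfl⟩
    intro iv env _
    rfl

end McCarthy
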